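/- Let σ > 0 and define ξ₁(x) = (cos(σx/2)/(x² − (π/σ)²))² for x ∈ ℝ (extended continuously at x = ±π/σ). Then ξ₁ ∈ L¹(ℝ), its Fourier transform vanishes outside [−σ, σ], and ∫_ℝ ξ₁(t) dt = σ³/(4π). -/

import Mathlib

open MeasureTheory Set
open scoped FourierTransform Real

/-- `ξ₁(x) = (cos(σx/2)/(x² − (π/σ)²))²`, extended continuously at `x = ±π/σ`. -/
noncomputable def xi1 (σ : ℝ) (x : ℝ) : ℝ :=
  if x ^ 2 = (Real.pi / σ) ^ 2 then σ ^ 4 / (16 * Real.pi ^ 2)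
  else (Real.cos (σ * x / 2) / (x ^ 2 - (Real.pi / σ) ^ 2)) ^ 2


namespace Stmt12Aux

/-- Hann-type window: `cos(π t/σ)` on `[-σ/2, σ/2]`. -/
noncomputable def gg (σ : ℝ) (t : ℝ) : ℂ :=
  if t ∈ Set.Icc (-(σ/2)) (σ/2) then ((Real.cos (Real.pi / σ * t) : ℝ) : ℂ) else 0

/-- Explicit value of the Fourier transform of `gg`. -/
noncomputable def psi (σ : ℝ) (b : ℝ) : ℝ :=
  if b ^ 2 = (Real.pi / σ) ^ 2 then σ / 2
  else 2 * (Real.pi / σ) * Real.cos (σ * b / 2) / ((Real.pi / σ) ^ 2 - b ^ 2)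

variable {σ : ℝ}

lemma gg_cont (hσ : 0 < σ) : Continuous (gg σ) := by
  unfold gg
  apply Continuous.if
  · intro t ht
    have h1 : frontier {x : ℝ | x ∈ Set.Icc (-(σ/2)) (σ/2)} = {-(σ/2), σ/2} := by
      exact frontier_Icc (by linarith : -(σ/2) ≤ σ/2)
    rw [h1] at ht
    rcases ht with rfl | rfl
    · have h2 : Real.pi / σ * -(σ/2) = -(Real.pi/2) := by field_simp; try ring
      simp [h2]
    · have h2 : Real.pi / σ * (σ/2) = Real.pi/2 := by field_simp; try ring
      simp [h2]
  · exact Complex.continuous_ofReal.comp (Real.continuous_cos.comp (by fun_prop))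
  · exact continuous_const

lemma gg_supp : HasCompactSupport (gg σ) :=
  HasCompactSupport.intro (isCompact_Icc (a := -(σ/2)) (b := σ/2))
    (fun x hx => by simp only [gg, if_neg hx])

lemma gg_int (hσ : 0 < σ) : Integrable (gg σ) :=
  (gg_cont hσ).integrable_of_hasCompactSupport gg_supp


lemma cos_expand (z : ℂ) :
    Complex.cos z = (Complex.exp (z * Complex.I) + Complex.exp (-z * Complex.I)) / 2 := by
  rw [Complex.exp_mul_I, Complex.exp_mul_I, Complex.cos_neg, Complex.sin_neg]
  ring

lemma exp_sub_exp (θ : ℝ) :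
    Complex.exp ((θ : ℂ) * Complex.I) - Complex.exp (((-θ : ℝ) : ℂ) * Complex.I)
      = 2 * Complex.sin (θ : ℂ) * Complex.I := by
  have h1 : ((-θ : ℝ) : ℂ) * Complex.I = (-(θ : ℂ)) * Complex.I := by push_cast; ring
  rw [h1, Complex.exp_mul_I, Complex.exp_mul_I, Complex.cos_neg, Complex.sin_neg]
  ring

lemma F_eq {σ : ℝ} (hσ : 0 < σ) (x : ℝ) :
    𝓕 (gg σ) x = ((psi σ (2 * Real.pi * x) : ℝ) : ℂ) := by
  have hπ := Real.pi_pos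
  set a : ℝ := Real.pi / σ with ha_def
  set b : ℝ := 2 * Real.pi * x with hb_def
  set c : ℝ := σ / 2 with hc_def
  have ha : 0 < a := div_pos hπ hσ
  have hc : 0 < c := by positivity
  have hac : a * c = Real.pi / 2 := by
    rw [ha_def, hc_def]; field_simp; try ring
  rw [Real.fourier_real_eq_integral_exp_smul]
  have step1 : (fun v : ℝ => Complex.exp ((-2 * Real.pi * v * x : ℝ) * Complex.I) • gg σ v)
      = Set.indicator (Set.Icc (-c) c)
          (fun v : ℝ => (Complex.exp (((a - b : ℝ) : ℂ) * Complex.I * v)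
            + Complex.exp (((-(a + b) : ℝ) : ℂ) * Complex.I * v)) / 2) := by
    funext v
    rw [Set.indicator_apply]
    unfold gg
    by_cases hv : v ∈ Set.Icc (-c) c
    · rw [if_pos hv, if_pos (by exact hv), smul_eq_mul]
      rw [Complex.ofReal_cos, cos_expand]
      have e1 : ((-2 * Real.pi * v * x : ℝ) : ℂ) * Complex.I + ((Real.pi / σ * v : ℝ) : ℂ) * Complex.I
          = ((a - b : ℝ) : ℂ) * Complex.I * v := by
        rw [ha_def, hb_def]; push_cast; ring
      have e2 : ((-2 * Real.pi * v * x : ℝ) : ℂ) * Complex.I + (-((Real.pi / σ * v : ℝ) : ℂ)) * Complex.I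
          = ((-(a + b) : ℝ) : ℂ) * Complex.I * v := by
        rw [ha_def, hb_def]; push_cast; ring
      rw [← mul_div_assoc, mul_add, ← Complex.exp_add, ← Complex.exp_add, e1, e2]
    · rw [if_neg hv, if_neg (by exact hv), smul_zero]
  rw [step1, MeasureTheory.integral_indicator measurableSet_Icc,
    MeasureTheory.integral_Icc_eq_integral_Ioc,
    ← intervalIntegral.integral_of_le (by linarith : -c ≤ c)]
  have i1 : IntervalIntegrable (fun v : ℝ => Complex.exp (((a - b : ℝ) : ℂ) * Complex.I * v))
      MeasureTheory.volume (-c) c :=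
    (Complex.continuous_exp.comp (continuous_const.mul Complex.continuous_ofReal)).intervalIntegrable _ _
  have i2 : IntervalIntegrable (fun v : ℝ => Complex.exp (((-(a + b) : ℝ) : ℂ) * Complex.I * v))
      MeasureTheory.volume (-c) c :=
    (Complex.continuous_exp.comp (continuous_const.mul Complex.continuous_ofReal)).intervalIntegrable _ _
  rw [intervalIntegral.integral_div, intervalIntegral.integral_add i1 i2]
  have ev : ∀ m : ℝ, m ≠ 0 →
      (∫ v in (-c)..c, Complex.exp ((m : ℂ) * Complex.I * v))
        = ((2 * Real.sin (m * c) / m : ℝ) : ℂ) := by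
    intro m hm
    have hm' : (m : ℂ) ≠ 0 := Complex.ofReal_ne_zero.mpr hm
    have hK : ((m : ℂ) * Complex.I) ≠ 0 := mul_ne_zero hm' Complex.I_ne_zero
    rw [integral_exp_mul_complex hK,
      show (m : ℂ) * Complex.I * (c : ℂ) = ((m * c : ℝ) : ℂ) * Complex.I by push_cast; ring,
      show (m : ℂ) * Complex.I * ((-c : ℝ) : ℂ) = ((-(m * c) : ℝ) : ℂ) * Complex.I by push_cast; ring,
      exp_sub_exp (m * c)]
    push_cast
    field_simp
    try ring
  rcases eq_or_ne b a with hba | hba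
  · -- b = a : first exponent vanishes
    have h2a : (2 : ℝ) * a ≠ 0 := by positivity
    have t1 : (∫ v in (-c)..c, Complex.exp (((a - b : ℝ) : ℂ) * Complex.I * v)) = ((2 * c : ℝ) : ℂ) := by
      rw [hba]; simp; push_cast; ring
    have t2 : (∫ v in (-c)..c, Complex.exp (((-(a + b) : ℝ) : ℂ) * Complex.I * v))
        = ((2 * Real.sin (-(a + b) * c) / (-(a + b)) : ℝ) : ℂ) :=
      ev _ (by rw [hba]; intro h; apply h2a; linarith [neg_eq_zero.mp h])
    rw [t1, t2, hba]
    have hz : Real.sin (-(a + a) * c) = 0 := by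
      have h5 : -(a + a) * c = -Real.pi := by
        have : -(a + a) * c = -(2 * (a * c)) := by ring
        rw [this, hac]; ring
      rw [h5, Real.sin_neg, Real.sin_pi, neg_zero]
    rw [hz, psi, if_pos (by rw [ha_def]), hc_def]
    push_cast
    norm_num
  rcases eq_or_ne b (-a) with hba' | hba'
  · -- b = -a : second exponent vanishes
    have h2a : (2 : ℝ) * a ≠ 0 := by positivity
    have t2 : (∫ v in (-c)..c, Complex.exp (((-(a + b) : ℝ) : ℂ) * Complex.I * v)) = ((2 * c : ℝ) : ℂ) := by
      rw [hba']; simp; push_cast; ring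
    have t1 : (∫ v in (-c)..c, Complex.exp (((a - b : ℝ) : ℂ) * Complex.I * v))
        = ((2 * Real.sin ((a - b) * c) / (a - b) : ℝ) : ℂ) :=
      ev _ (by rw [hba']; intro h; apply h2a; linarith [sub_eq_zero.mp h])
    rw [t1, t2, hba']
    have hz : Real.sin ((a - -a) * c) = 0 := by
      have h5 : (a - -a) * c = Real.pi := by
        have : (a - -a) * c = 2 * (a * c) := by ring
        rw [this, hac]; ring
      rw [h5, Real.sin_pi]
    rw [hz, psi, if_pos (by rw [ha_def]; ring), hc_def]
    push_cast
    ring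
  · -- generic case
    have hmb1 : a - b ≠ 0 := fun h => hba (by linarith [sub_eq_zero.mp h])
    have h3 : a + b ≠ 0 := fun h => hba' (by linarith)
    have hmb2 : -(a + b) ≠ 0 := neg_ne_zero.mpr h3
    have h4 : a ^ 2 - b ^ 2 ≠ 0 := by
      have h6 : a ^ 2 - b ^ 2 = (a - b) * (a + b) := by ring
      rw [h6]; exact mul_ne_zero hmb1 h3
    rw [ev _ hmb1, ev _ hmb2]
    have s1 : Real.sin ((a - b) * c) = Real.cos (σ * b / 2) := by
      have h7 : (a - b) * c = Real.pi / 2 - σ * b / 2 := by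
        rw [sub_mul, hac, hc_def]; ring
      rw [h7, Real.sin_pi_div_two_sub]
    have s2 : Real.sin (-(a + b) * c) = -Real.cos (σ * b / 2) := by
      have h7 : -(a + b) * c = -(Real.pi / 2 + σ * b / 2) := by
        rw [neg_mul, add_mul, hac, hc_def]; ring
      rw [h7, Real.sin_neg, Real.sin_add, Real.sin_pi_div_two, Real.cos_pi_div_two]
      ring
    rw [s1, s2, psi, if_neg (by
      rw [sq_eq_sq_iff_eq_or_eq_neg]
      push_neg
      rw [← ha_def]
      exact ⟨hba, hba'⟩)]
    have key : ∀ A B C : ℝ, A - B ≠ 0 → A + B ≠ 0 → A ^ 2 - B ^ 2 ≠ 0 →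
        (2 * C / (A - B) + 2 * -C / -(A + B)) / 2 = 2 * A * C / (A ^ 2 - B ^ 2) := by
      intro A B C h1 h2 h3
      have e : 2 * -C / -(A + B) = 2 * C / (A + B) := by
        rw [show 2 * -C = -(2 * C) by ring, neg_div_neg_eq]
      rw [e]
      field_simp
      ring
    rw [show (2 * (Real.pi / σ) * Real.cos (σ * b / 2) / ((Real.pi / σ) ^ 2 - b ^ 2) : ℝ)
        = 2 * a * Real.cos (σ * b / 2) / (a ^ 2 - b ^ 2) from by rw [ha_def]]
    exact_mod_cast congrArg Complex.ofReal (key a b (Real.cos (σ * b / 2)) hmb1 h3 h4)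


variable {σ : ℝ}

lemma F_cont (hσ : 0 < σ) : Continuous (𝓕 (gg σ)) :=
  VectorFourier.fourierIntegral_continuous Real.continuous_fourierChar
    (by exact continuous_inner) (gg_int hσ)

lemma F_le (hσ : 0 < σ) (x : ℝ) : ‖𝓕 (gg σ) x‖ ≤ σ := by
  refine (VectorFourier.norm_fourierIntegral_le_integral_norm _ _ _ _ _).trans ?_
  have h1 : ∀ t : ℝ, ‖gg σ t‖ ≤ Set.indicator (Set.Icc (-(σ/2)) (σ/2)) (fun _ => (1:ℝ)) t := by
    intro t
    rw [Set.indicator_apply]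
    unfold gg
    split
    · rw [Complex.norm_real]
      exact (Real.abs_cos_le_one _).trans (by norm_num)
    · simp
  have h2 : (∫ t : ℝ, ‖gg σ t‖) ≤ ∫ t : ℝ, Set.indicator (Set.Icc (-(σ/2)) (σ/2)) (fun _ => (1:ℝ)) t :=
    integral_mono (gg_int hσ).norm
      (((integrableOn_const_iff).mpr (Or.inr measure_Icc_lt_top)).integrable_indicator measurableSet_Icc) h1
  refine h2.trans ?_
  rw [integral_indicator_const _ measurableSet_Icc]
  simp [Real.volume_Icc]
  exact hσ.le

lemma psi_eq_F (hσ : 0 < σ) (b : ℝ) : ((psi σ b : ℝ) : ℂ) = 𝓕 (gg σ) (b / (2 * Real.pi)) := by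
  rw [F_eq hσ, show 2 * Real.pi * (b / (2 * Real.pi)) = b from by field_simp]

lemma psi_le (hσ : 0 < σ) (b : ℝ) : |psi σ b| ≤ σ := by
  have h := F_le hσ (b / (2 * Real.pi))
  rwa [← psi_eq_F hσ, Complex.norm_real, Real.norm_eq_abs] at h

/-- Decay constant for `psi`. -/
noncomputable def CC (σ : ℝ) : ℝ :=
  σ * (1 + (max (2 * (Real.pi / σ)) 1) ^ 2) + 16 * (Real.pi / σ) / 3

lemma CC_pos (hσ : 0 < σ) : 0 < CC σ := by
  have hπ := Real.pi_pos
  have h1 : (0:ℝ) < 1 + (max (2 * (Real.pi / σ)) 1) ^ 2 := by positivity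
  have h2 : (0:ℝ) < 16 * (Real.pi / σ) / 3 := by positivity
  have h3 := mul_pos hσ h1
  unfold CC; linarith

lemma psi_bound (hσ : 0 < σ) (b : ℝ) : |psi σ b| ≤ CC σ / (1 + b ^ 2) := by
  have hπ := Real.pi_pos
  set a : ℝ := Real.pi / σ with ha_def
  have ha : 0 < a := div_pos hπ hσ
  set B : ℝ := max (2 * a) 1 with hB_def
  have hB1 : (1:ℝ) ≤ B := le_max_right _ _
  have hB2 : 2 * a ≤ B := le_max_left _ _
  have hb2 : (0:ℝ) < 1 + b ^ 2 := by positivity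
  have hS : 0 ≤ σ * (1 + B ^ 2) := by positivity
  have hCC : CC σ = σ * (1 + B ^ 2) + 16 * a / 3 := by
    unfold CC; rw [← ha_def, ← hB_def]
  rcases le_or_gt |b| B with hbB | hbB
  · have h1 : |psi σ b| ≤ σ := psi_le hσ b
    rw [le_div_iff₀ hb2]
    have hbsq : b ^ 2 ≤ B ^ 2 := by nlinarith [sq_abs b, abs_nonneg b]
    have h2 : |psi σ b| * (1 + b ^ 2) ≤ σ * (1 + b ^ 2) := mul_le_mul_of_nonneg_right h1 hb2.le
    have h3 : σ * (1 + b ^ 2) ≤ σ * (1 + B ^ 2) := mul_le_mul_of_nonneg_left (by linarith) hσ.le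
    have h4 : 0 ≤ 16 * a / 3 := by positivity
    rw [hCC]; linarith
  · have hbsq : B ^ 2 < b ^ 2 := by nlinarith [sq_abs b, abs_nonneg b]
    have h4a : 4 * a ^ 2 ≤ B ^ 2 := by
      nlinarith [pow_le_pow_left₀ (by positivity : (0:ℝ) ≤ 2 * a) hB2 2]
    have h1b : 1 < b ^ 2 := by nlinarith
    have hab : a ^ 2 < b ^ 2 := by nlinarith [mul_pos ha ha]
    have hcond : ¬ (b ^ 2 = (Real.pi / σ) ^ 2) := by
      rw [← ha_def]; intro h; rw [h] at hab; exact lt_irrefl _ hab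
    rw [psi, if_neg hcond, ← ha_def]
    have hden : |a ^ 2 - b ^ 2| = b ^ 2 - a ^ 2 := by
      rw [abs_sub_comm, abs_of_pos (by linarith)]
    rw [abs_div, abs_mul, hden]
    have habs := Real.abs_cos_le_one (σ * b / 2)
    have h2a : |2 * a| = 2 * a := abs_of_pos (by linarith)
    rw [h2a, div_le_div_iff₀ (by linarith) hb2, hCC]
    nlinarith [mul_nonneg hS (by linarith : (0:ℝ) ≤ b ^ 2 - a ^ 2),
      mul_le_mul_of_nonneg_left (show 4 * a ^ 2 ≤ b ^ 2 by linarith) ha.le,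
      mul_le_mul_of_nonneg_left (show (1:ℝ) ≤ b ^ 2 by linarith) ha.le,
      mul_le_mul_of_nonneg_right
        (mul_le_mul_of_nonneg_left habs (by linarith : (0:ℝ) ≤ 2 * a)) hb2.le]

lemma F_norm_bound (hσ : 0 < σ) (x : ℝ) : ‖𝓕 (gg σ) x‖ ≤ CC σ / (1 + x ^ 2) := by
  have h1 : ‖𝓕 (gg σ) x‖ = |psi σ (2 * Real.pi * x)| := by
    rw [F_eq hσ, Complex.norm_real, Real.norm_eq_abs]
  have h2 := psi_bound hσ (2 * Real.pi * x)
  have h3 : CC σ / (1 + (2 * Real.pi * x) ^ 2) ≤ CC σ / (1 + x ^ 2) := by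
    apply div_le_div_of_nonneg_left (CC_pos hσ).le (by positivity)
    have hp : 9 ≤ Real.pi ^ 2 := by nlinarith [Real.pi_gt_three]
    nlinarith [mul_le_mul_of_nonneg_right hp (sq_nonneg x), sq_nonneg x]
  rw [h1]; linarith

lemma F_int (hσ : 0 < σ) : Integrable (𝓕 (gg σ)) := by
  refine Integrable.mono' (integrable_inv_one_add_sq.const_mul (CC σ))
    (F_cont hσ).aestronglyMeasurable (ae_of_all _ fun x => ?_)
  have := F_norm_bound hσ x
  rwa [div_eq_mul_inv] at this

lemma F_sq_int (hσ : 0 < σ) : Integrable (fun x : ℝ => (𝓕 (gg σ) x) ^ 2) := by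
  refine Integrable.mono' ((integrable_inv_one_add_sq).const_mul (σ * CC σ))
    (((F_cont hσ).pow 2).aestronglyMeasurable) (ae_of_all _ fun x => ?_)
  have h1 := F_le hσ x
  have h2 := F_norm_bound hσ x
  have h3 : ‖(𝓕 (gg σ) x) ^ 2‖ = ‖𝓕 (gg σ) x‖ * ‖𝓕 (gg σ) x‖ := by
    rw [norm_pow]; ring
  rw [h3]
  calc ‖𝓕 (gg σ) x‖ * ‖𝓕 (gg σ) x‖ ≤ σ * (CC σ / (1 + x ^ 2)) :=
        mul_le_mul h1 h2 (norm_nonneg _) hσ.le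
    _ = σ * CC σ * (1 + x ^ 2)⁻¹ := by rw [div_eq_mul_inv]; ring

lemma key8 (hσ : 0 < σ) (y : ℝ) :
    (∫ s : ℝ, Complex.exp ((-2 * Real.pi * s * y : ℝ) * Complex.I) * (𝓕 (gg σ) s) ^ 2)
      = ∫ t : ℝ, gg σ t * gg σ (-(y + t)) := by
  have hFi := F_int hσ
  have hFc := F_cont hσ
  have hgi := gg_int hσ
  have hgc := gg_cont hσ
  set F := 𝓕 (gg σ) with hF_def
  set H : ℝ → ℝ → ℂ := fun s t =>
    gg σ t * (Complex.exp ((-2 * Real.pi * s * (y + t) : ℝ) * Complex.I) • F s) with hH_def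
  have stepA : ∀ s : ℝ, Complex.exp ((-2 * Real.pi * s * y : ℝ) * Complex.I) * F s ^ 2
      = ∫ t : ℝ, H s t := by
    intro s
    have e1 : ∀ t : ℝ, H s t
        = (Complex.exp ((-2 * Real.pi * s * y : ℝ) * Complex.I) * F s)
            * (Complex.exp ((-2 * Real.pi * t * s : ℝ) * Complex.I) • gg σ t) := by
      intro t
      simp only [hH_def, smul_eq_mul]
      rw [show ((-2 * Real.pi * s * (y + t) : ℝ) : ℂ) * Complex.I
            = ((-2 * Real.pi * s * y : ℝ) : ℂ) * Complex.I
              + ((-2 * Real.pi * t * s : ℝ) : ℂ) * Complex.I from by push_cast; ring,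
        Complex.exp_add]
      ring
    calc Complex.exp ((-2 * Real.pi * s * y : ℝ) * Complex.I) * F s ^ 2
        = (Complex.exp ((-2 * Real.pi * s * y : ℝ) * Complex.I) * F s)
            * (∫ t : ℝ, Complex.exp ((-2 * Real.pi * t * s : ℝ) * Complex.I) • gg σ t) := by
          rw [← Real.fourier_real_eq_integral_exp_smul, ← hF_def]; ring
      _ = ∫ t : ℝ, (Complex.exp ((-2 * Real.pi * s * y : ℝ) * Complex.I) * F s)
            * (Complex.exp ((-2 * Real.pi * t * s : ℝ) * Complex.I) • gg σ t) :=
          (integral_const_mul _ _).symm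
      _ = ∫ t : ℝ, H s t := by simp only [e1]
  have hHi : Integrable (Function.uncurry H) (volume.prod volume) := by
    have base : Integrable (fun p : ℝ × ℝ => F p.1 * gg σ p.2) (volume.prod volume) :=
      hFi.mul_prod hgi
    have hcont : Continuous (Function.uncurry H) := by
      apply Continuous.mul (hgc.comp continuous_snd)
      refine Continuous.smul (f := fun a : ℝ × ℝ => Complex.exp ((-2 * Real.pi * a.1 * (y + a.2) : ℝ) * Complex.I)) ?_ (hFc.comp continuous_fst)
      apply Complex.continuous_exp.comp
      apply Continuous.mul _ continuous_const
      exact Complex.continuous_ofReal.comp (by fun_prop)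
    refine base.norm.mono' hcont.aestronglyMeasurable (ae_of_all _ fun p => ?_)
    show ‖H p.1 p.2‖ ≤ _
    rw [hH_def]
    simp only [smul_eq_mul]
    rw [norm_mul, norm_mul, Complex.norm_exp_ofReal_mul_I, one_mul, norm_mul]
    rw [mul_comm]
  have hD : ∀ t : ℝ, (∫ s : ℝ, H s t) = gg σ t * gg σ (-(y + t)) := by
    intro t
    rw [hH_def]
    rw [integral_const_mul, ← Real.fourier_real_eq_integral_exp_smul]
    congr 1
    have h5 := Real.fourierInv_eq_fourier_neg (𝓕 (gg σ)) (-(y + t))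
    rw [neg_neg] at h5
    rw [hF_def, ← h5]
    exact hgi.fourierInv_fourier_eq hFi hgc.continuousAt
  calc (∫ s : ℝ, Complex.exp ((-2 * Real.pi * s * y : ℝ) * Complex.I) * F s ^ 2)
      = ∫ s : ℝ, ∫ t : ℝ, H s t := by simp only [stepA]
    _ = ∫ t : ℝ, ∫ s : ℝ, H s t := integral_integral_swap hHi
    _ = ∫ t : ℝ, gg σ t * gg σ (-(y + t)) := by simp only [hD]



lemma xi1_eq_psi (hσ : 0 < σ) (b : ℝ) :
    xi1 σ b = σ ^ 2 / (4 * Real.pi ^ 2) * (psi σ b) ^ 2 := by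
  have hπ := Real.pi_pos
  rw [xi1, psi]
  by_cases h : b ^ 2 = (Real.pi / σ) ^ 2
  · rw [if_pos h, if_pos h]
    field_simp
    ring
  · rw [if_neg h, if_neg h]
    have hd : (Real.pi / σ) ^ 2 - b ^ 2 ≠ 0 := fun hh => h (by linarith)
    have hd' : b ^ 2 - (Real.pi / σ) ^ 2 ≠ 0 := fun hh => h (by linarith)
    have e1 : (2 * (Real.pi/σ) * Real.cos (σ*b/2) / ((Real.pi/σ)^2 - b^2))^2
        = (4 * (Real.pi/σ)^2) * (Real.cos (σ*b/2)^2 / (b^2 - (Real.pi/σ)^2)^2) := by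
      rw [div_pow, show ((Real.pi/σ)^2 - b^2)^2 = (b^2 - (Real.pi/σ)^2)^2 by ring,
        mul_pow, mul_pow]
      ring
    rw [e1, div_pow,
      show σ^2/(4*Real.pi^2) * ((4*(Real.pi/σ)^2) * (Real.cos (σ*b/2)^2/(b^2-(Real.pi/σ)^2)^2))
        = (σ^2/(4*Real.pi^2) * (4*(Real.pi/σ)^2)) * (Real.cos (σ*b/2)^2/(b^2-(Real.pi/σ)^2)^2) by ring,
      show σ^2/(4*Real.pi^2) * (4*(Real.pi/σ)^2) = 1 from by field_simp; try ring,
      one_mul]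

lemma gg_mul_zero (hσ : 0 < σ) {y : ℝ} (hy : σ < |y|) (t : ℝ) :
    gg σ t * gg σ (-(y + t)) = 0 := by
  by_cases h1 : t ∈ Set.Icc (-(σ/2)) (σ/2)
  · have h2 : ¬ (-(y + t) ∈ Set.Icc (-(σ/2)) (σ/2)) := by
      intro h2
      rw [Set.mem_Icc] at h1 h2
      have hys : |y| ≤ σ := abs_le.mpr
        ⟨by linarith [h1.1, h1.2, h2.1, h2.2], by linarith [h1.1, h1.2, h2.1, h2.2]⟩
      linarith
    rw [show gg σ (-(y + t)) = 0 from by unfold gg; rw [if_neg h2], mul_zero]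
  · rw [show gg σ t = 0 from by unfold gg; rw [if_neg h1], zero_mul]

lemma autocorr_zero (hσ : 0 < σ) :
    (∫ t : ℝ, gg σ t * gg σ (-(0 + t))) = ((σ / 2 : ℝ) : ℂ) := by
  have hπ := Real.pi_pos
  have heq : ∀ t : ℝ, gg σ t * gg σ (-(0 + t))
      = ((Set.indicator (Set.Icc (-(σ/2)) (σ/2)) (fun u => Real.cos (Real.pi / σ * u) ^ 2) t : ℝ) : ℂ) := by
    intro t
    rw [zero_add]
    have hmem : -t ∈ Set.Icc (-(σ/2)) (σ/2) ↔ t ∈ Set.Icc (-(σ/2)) (σ/2) := by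
      rw [Set.mem_Icc, Set.mem_Icc]
      constructor <;> intro h <;> exact ⟨by linarith [h.1, h.2], by linarith [h.1, h.2]⟩
    unfold gg
    rw [Set.indicator_apply]
    by_cases h : t ∈ Set.Icc (-(σ/2)) (σ/2)
    · rw [if_pos h, if_pos (hmem.mpr h), if_pos h]
      push_cast
      rw [mul_neg, Complex.cos_neg]
      ring
    · rw [if_neg h, if_neg (fun hh => h (hmem.mp hh)), if_neg h, zero_mul]
      norm_num
  simp only [heq]
  refine Eq.trans integral_ofReal ?_
  have hreal : (∫ t : ℝ, Set.indicator (Set.Icc (-(σ/2)) (σ/2))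
      (fun u => Real.cos (Real.pi / σ * u) ^ 2) t) = σ / 2 := by
    rw [MeasureTheory.integral_indicator measurableSet_Icc,
      MeasureTheory.integral_Icc_eq_integral_Ioc,
      ← intervalIntegral.integral_of_le (by linarith : -(σ/2) ≤ σ/2)]
    rw [intervalIntegral.integral_comp_mul_left (fun u => Real.cos u ^ 2)
      (by positivity : Real.pi / σ ≠ 0)]
    rw [show Real.pi / σ * -(σ/2) = -(Real.pi/2) from by field_simp; try ring,
        show Real.pi / σ * (σ/2) = Real.pi/2 from by field_simp; try ring,
        integral_cos_sq]
    rw [Real.cos_pi_div_two, Real.cos_neg, Real.cos_pi_div_two]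
    rw [smul_eq_mul]
    field_simp
    ring
  exact congrArg Complex.ofReal hreal

lemma master (hσ : 0 < σ) (y : ℝ) :
    (∫ t : ℝ, Complex.exp (-Complex.I * ((y * t : ℝ) : ℂ)) * (xi1 σ t : ℂ))
      = ((σ ^ 2 / (4 * Real.pi ^ 2) : ℝ) : ℂ)
          * ((2 * Real.pi : ℝ) • ∫ t : ℝ, gg σ t * gg σ (-(y + t))) := by
  have hπ := Real.pi_pos
  have h2π : (0:ℝ) < 2 * Real.pi := by positivity
  set F := 𝓕 (gg σ) with hF_def
  have hx : ∀ t : ℝ, (xi1 σ t : ℂ)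
      = ((σ ^ 2 / (4 * Real.pi ^ 2) : ℝ) : ℂ) * (F (t / (2 * Real.pi))) ^ 2 := by
    intro t
    rw [xi1_eq_psi hσ, hF_def, ← psi_eq_F hσ]
    push_cast
    ring
  set Gf : ℝ → ℂ := fun t => Complex.exp (-Complex.I * ((y * t : ℝ) : ℂ)) * (F (t / (2 * Real.pi))) ^ 2
    with hGf_def
  have step1 : (∫ t : ℝ, Complex.exp (-Complex.I * ((y * t : ℝ) : ℂ)) * (xi1 σ t : ℂ))
      = ((σ ^ 2 / (4 * Real.pi ^ 2) : ℝ) : ℂ) * ∫ t : ℝ, Gf t := by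
    rw [← integral_const_mul]
    congr 1
    funext t
    rw [hx t, hGf_def]
    ring
  have hsub := Measure.integral_comp_mul_left Gf (2 * Real.pi)
  have step2 : (∫ t : ℝ, Gf t) = (2 * Real.pi : ℝ) • ∫ x : ℝ, Gf (2 * Real.pi * x) := by
    rw [hsub, abs_of_pos (inv_pos.mpr h2π), smul_smul, mul_inv_cancel₀ h2π.ne', one_smul]
  have step3 : (∫ x : ℝ, Gf (2 * Real.pi * x))
      = ∫ x : ℝ, Complex.exp ((-2 * Real.pi * x * y : ℝ) * Complex.I) * (F x) ^ 2 := by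
    congr 1
    funext x
    show Complex.exp (-Complex.I * ((y * (2 * Real.pi * x) : ℝ) : ℂ)) * (F ((2 * Real.pi * x) / (2 * Real.pi))) ^ 2 = _
    rw [show (2 * Real.pi * x) / (2 * Real.pi) = x from by field_simp]
    congr 2
    push_cast
    ring
  rw [step1, step2, step3, key8 hσ y]

end Stmt12Aux

open Stmt12Aux in
/-- `ξ₁ ∈ L¹(ℝ)`, its Fourier transform vanishes outside `[−σ, σ]`, and
`∫ ξ₁ = σ³/(4π)`. -/
theorem stmt12 (σ : ℝ) (hσ : 0 < σ) :
    Integrable (xi1 σ) ∧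
    (∀ y : ℝ, σ < |y| →
      ∫ t : ℝ, Complex.exp (-Complex.I * ((y * t : ℝ) : ℂ)) * (xi1 σ t : ℂ) = 0) ∧
    ∫ t : ℝ, xi1 σ t = σ ^ 3 / (4 * Real.pi) := by
  have hπ := Real.pi_pos
  refine ⟨?_, ?_, ?_⟩
  · -- integrability
    have hxi_eq : xi1 σ = fun t => σ ^ 2 / (4 * Real.pi ^ 2) * ‖𝓕 (gg σ) (t / (2 * Real.pi))‖ ^ 2 := by
      funext t
      rw [xi1_eq_psi hσ, ← psi_eq_F hσ, Complex.norm_real, Real.norm_eq_abs, sq_abs]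
    have hcont : Continuous (xi1 σ) := by
      rw [hxi_eq]
      exact continuous_const.mul (((F_cont hσ).comp (continuous_id.div_const _)).norm.pow 2)
    refine Integrable.mono' (integrable_inv_one_add_sq.const_mul (σ ^ 2 / (4 * Real.pi ^ 2) * CC σ ^ 2))
      hcont.aestronglyMeasurable (ae_of_all _ fun t => ?_)
    have h1 := psi_bound hσ t
    have hb2 : (0:ℝ) < 1 + t ^ 2 := by positivity
    have h2 : (psi σ t) ^ 2 ≤ (CC σ / (1 + t ^ 2)) ^ 2 := by
      rw [← sq_abs (psi σ t)]
      exact pow_le_pow_left₀ (abs_nonneg _) h1 2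
    have h3 : (CC σ / (1 + t ^ 2)) ^ 2 ≤ CC σ ^ 2 / (1 + t ^ 2) := by
      rw [div_pow]
      apply div_le_div_of_nonneg_left (sq_nonneg _) hb2
      nlinarith
    have h4 : ‖xi1 σ t‖ = σ ^ 2 / (4 * Real.pi ^ 2) * (psi σ t) ^ 2 := by
      rw [Real.norm_eq_abs, xi1_eq_psi hσ, abs_of_nonneg (by positivity)]
    rw [h4]
    calc σ ^ 2 / (4 * Real.pi ^ 2) * (psi σ t) ^ 2
        ≤ σ ^ 2 / (4 * Real.pi ^ 2) * (CC σ ^ 2 / (1 + t ^ 2)) := by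
          apply mul_le_mul_of_nonneg_left (h2.trans h3) (by positivity)
      _ = σ ^ 2 / (4 * Real.pi ^ 2) * CC σ ^ 2 * (1 + t ^ 2)⁻¹ := by
          rw [div_eq_mul_inv]; ring
  · -- vanishing of the Fourier transform
    intro y hy
    rw [master hσ y]
    have : (∫ t : ℝ, gg σ t * gg σ (-(y + t))) = 0 := by
      simp only [gg_mul_zero hσ hy]
      exact integral_zero _ _
    rw [this, smul_zero, mul_zero]
  · -- value of the integral
    have h0 := master hσ 0
    have hL : (∫ t : ℝ, Complex.exp (-Complex.I * ((0 * t : ℝ) : ℂ)) * (xi1 σ t : ℂ))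
        = ((∫ t : ℝ, xi1 σ t : ℝ) : ℂ) := by
      rw [show (fun t : ℝ => Complex.exp (-Complex.I * ((0 * t : ℝ) : ℂ)) * (xi1 σ t : ℂ))
          = fun t : ℝ => ((xi1 σ t : ℝ) : ℂ) from funext fun t => by norm_num]
      exact integral_ofReal
    rw [hL, autocorr_zero hσ] at h0
    have h1 : ((∫ t : ℝ, xi1 σ t : ℝ) : ℂ) = ((σ ^ 3 / (4 * Real.pi) : ℝ) : ℂ) := by
      rw [h0, Complex.real_smul]
      push_cast
      rw [show ((σ:ℂ) ^ 2 / (4 * (Real.pi:ℂ) ^ 2)) * (2 * Real.pi * (σ / 2)) = σ ^ 3 / (4 * Real.pi) from by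
        have : (Real.pi : ℂ) ≠ 0 := Complex.ofReal_ne_zero.mpr hπ.ne'
        field_simp]
    exact_mod_cast h1
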